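/- Let t ∈ GL_n(ℂ) be a diagonal matrix with pairwise distinct diagonal entries and let u be a unipotent upper triangular matrix. Then there exists a unipotent upper triangular matrix v such that t·u = v^{-1}·t·v. In particular, t·u is conjugate to t in GL_n(ℂ). -/
import Mathlib
open Matrix

noncomputable def rowF (n : ℕ) (d : Fin n → ℂ) (u : Matrix (Fin n) (Fin n) ℂ)
    (i : Fin n) : ℕ → ℕ → ℂ
  | 0, _ => 0
  | (m+1), j =>
      if j = m then
        if hm : m < n then
          if (i : ℕ) < m then
            (∑ k : Fin n, rowF n d u i m k * d k * u k ⟨m, hm⟩) / (d i - d ⟨m, hm⟩)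
          else if m = (i : ℕ) then 1 else 0
        else 0
      else rowF n d u i m j

variable {n : ℕ} {d : Fin n → ℂ} {u : Matrix (Fin n) (Fin n) ℂ}

lemma rowF_ge (i : Fin n) : ∀ m j, m ≤ j → rowF n d u i m j = 0 := by
  intro m
  induction m with
  | zero => intro j _; rfl
  | succ m ih =>
    intro j hj
    rw [rowF]
    have h1 : j ≠ m := by omega
    rw [if_neg h1, ih j (by omega)]

lemma rowF_stable (i : Fin n) : ∀ m j, j < m → rowF n d u i m j = rowF n d u i (j+1) j := by
  intro m
  induction m with
  | zero => intro j hj; omega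
  | succ m ih =>
    intro j hj
    rcases eq_or_lt_of_le (Nat.lt_succ_iff.mp hj) with h | h
    · subst h; rfl
    · rw [rowF, if_neg (by omega), ih j h]

lemma rowF_diag (i : Fin n) : rowF n d u i n i = 1 := by
  rw [rowF_stable i n i i.isLt, rowF, if_pos rfl, dif_pos i.isLt,
    if_neg (lt_irrefl _), if_pos rfl]

lemma rowF_low (i j : Fin n) (h : j < i) : rowF n d u i n j = 0 := by
  rw [rowF_stable i n j j.isLt, rowF, if_pos rfl, dif_pos j.isLt,
    if_neg (by omega), if_neg (by omega)]

lemma rowF_high (i j : Fin n) (h : i < j) :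
    rowF n d u i n j =
      (∑ k : Fin n, rowF n d u i j k * d k * u k j) / (d i - d j) := by
  rw [rowF_stable i n j j.isLt, rowF, if_pos rfl, dif_pos j.isLt, if_pos (show (i:ℕ) < (j:ℕ) from h)]

lemma rowF_key (hd : Function.Injective d) (hu1 : ∀ i, u i i = 1)
    (hu0 : ∀ i j : Fin n, j < i → u i j = 0) (i j : Fin n) :
    ∑ k : Fin n, rowF n d u i n k * d k * u k j = d i * rowF n d u i n j := by
  have hsplit : ∑ k : Fin n, rowF n d u i n k * d k * u k j
      = (∑ k ∈ Finset.Iio j, rowF n d u i n k * d k * u k j)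
        + rowF n d u i n j * d j := by
    rw [← Finset.sum_subset (Finset.subset_univ (Finset.Iic j))
      (fun k _ hk => by
        have hjk : j < k := by simpa using hk
        rw [hu0 k j hjk, mul_zero]),
      ← Finset.Iio_insert, Finset.sum_insert (by simp), hu1, mul_one, add_comm]
  rcases lt_trichotomy i j with h | h | h
  · have hS : ∑ k : Fin n, rowF n d u i (j : ℕ) (k : ℕ) * d k * u k j
        = ∑ k ∈ Finset.Iio j, rowF n d u i n k * d k * u k j := by
      rw [← Finset.sum_subset (Finset.subset_univ (Finset.Iio j))
        (fun k _ hk => by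
          have hjk : (j : ℕ) ≤ (k : ℕ) := by simpa using hk
          rw [rowF_ge i _ _ hjk, zero_mul, zero_mul])]
      refine Finset.sum_congr rfl fun k hk => ?_
      have hkj : (k : ℕ) < (j : ℕ) := (by exact_mod_cast Finset.mem_Iio.mp hk)
      rw [rowF_stable i (j : ℕ) (k : ℕ) hkj, ← rowF_stable i n (k : ℕ) k.isLt]
    have hne : d i - d j ≠ 0 := sub_ne_zero.mpr (fun he => absurd (hd he) h.ne)
    have hv := rowF_high (d := d) (u := u) i j h
    rw [hS] at hv
    have hv' : rowF n d u i n j * (d i - d j)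
        = ∑ k ∈ Finset.Iio j, rowF n d u i n k * d k * u k j := by
      rw [hv, div_mul_cancel₀ _ hne]
    rw [hsplit, ← hv']
    ring
  · subst h
    rw [hsplit, rowF_diag]
    have : ∀ k ∈ Finset.Iio i, rowF n d u i n k * d k * u k i = 0 := by
      intro k hk
      rw [rowF_low i k (Finset.mem_Iio.mp hk), zero_mul, zero_mul]
    rw [Finset.sum_eq_zero this]
    ring
  · rw [hsplit, rowF_low i j h]
    have : ∀ k ∈ Finset.Iio j, rowF n d u i n k * d k * u k j = 0 := by
      intro k hk
      have : k < i := lt_trans (Finset.mem_Iio.mp hk) h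
      rw [rowF_low i k this, zero_mul, zero_mul]
    rw [Finset.sum_eq_zero this]
    ring

/-- For a diagonal matrix `t` with pairwise distinct (nonzero) diagonal entries
and a unipotent upper triangular matrix `u`, there is a unipotent upper
triangular `v` with `t * u = v⁻¹ * t * v`; in particular `t * u` is conjugate
to `t`. -/
theorem t_mul_unipotent_conjugate_to_t (n : ℕ) (d : Fin n → ℂ)
    (hd0 : ∀ i, d i ≠ 0) (hd : Function.Injective d)
    (u : Matrix (Fin n) (Fin n) ℂ)
    (hu1 : ∀ i, u i i = 1) (hu0 : ∀ i j : Fin n, j < i → u i j = 0) :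
    ∃ v : Matrix (Fin n) (Fin n) ℂ,
      (∀ i, v i i = 1) ∧ (∀ i j : Fin n, j < i → v i j = 0) ∧
      Matrix.diagonal d * u = v⁻¹ * Matrix.diagonal d * v := by
  set v : Matrix (Fin n) (Fin n) ℂ := Matrix.of fun i j => rowF n d u i n j with hv
  have hvd : ∀ i, v i i = 1 := fun i => rowF_diag i
  have hvl : ∀ i j : Fin n, j < i → v i j = 0 := fun i j h => rowF_low i j h
  have hmul : v * (Matrix.diagonal d * u) = Matrix.diagonal d * v := by
    ext i j
    rw [Matrix.mul_apply, Matrix.diagonal_mul]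
    simp only [Matrix.diagonal_mul]
    calc ∑ k : Fin n, v i k * (d k * u k j)
        = ∑ k : Fin n, rowF n d u i n k * d k * u k j := by
          refine Finset.sum_congr rfl fun k _ => ?_
          simp only [hv, Matrix.of_apply]; ring
      _ = d i * rowF n d u i n j := rowF_key hd hu1 hu0 i j
      _ = d i * v i j := rfl
  have hbt : v.BlockTriangular id := fun i j h => hvl i j h
  have hdet : v.det = 1 := by
    rw [Matrix.det_of_upperTriangular hbt]
    simp [hvd]
  have hunit : IsUnit v.det := by rw [hdet]; exact isUnit_one
  refine ⟨v, hvd, hvl, ?_⟩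
  rw [mul_assoc, ← hmul, ← mul_assoc, Matrix.nonsing_inv_mul v hunit, one_mul]
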